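/- The curve γ(s) = (ζ_1 e^{iα_1 s}, …, ζ_n e^{iα_n s}) in ℂ^n (with all ζ_j ≠ 0, all α_j ≠ 0) fails to be injective if and only if every α_j is a rational multiple of α_1. -/

import Mathlib

/-- The curve `γ(s) = (ζ_1 e^{iα_1 s}, …, ζ_n e^{iα_n s})` in
`ℂ^n` (all `ζ_j ≠ 0`, all `α_j` nonzero and distinct) fails to be injective if
and only if every `α_j` is a rational multiple of `α_1`. -/
theorem stmt14 (n : ℕ)
    (ζ : Fin (n + 1) → ℂ) (hζ : ∀ j, ζ j ≠ 0)
    (α : Fin (n + 1) → ℝ) (hα0 : ∀ j, α j ≠ 0) (hα : Function.Injective α)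
    (γ : ℝ → Fin (n + 1) → ℂ)
    (hγ : ∀ s j, γ s j = ζ j * Complex.exp (Complex.I * (α j * s))) :
    ¬ Function.Injective γ ↔ ∀ j, ∃ q : ℚ, α j = (q : ℝ) * α 0 := by
  constructor
  · intro hni
    obtain ⟨s, u, hsu, hne⟩ := Function.not_injective_iff.mp hni
    have key : ∀ j, ∃ k : ℤ, α j * (s - u) = 2 * Real.pi * k := by
      intro j
      have h1 : γ s j = γ u j := congrFun hsu j
      rw [hγ, hγ] at h1
      have h2 := mul_left_cancel₀ (hζ j) h1
      rw [Complex.exp_eq_exp_iff_exists_int] at h2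
      obtain ⟨k, hk⟩ := h2
      refine ⟨k, ?_⟩
      have h3 : ((α j * s : ℝ) : ℂ) = ((α j * u + k * (2 * Real.pi) : ℝ) : ℂ) := by
        apply mul_left_cancel₀ Complex.I_ne_zero
        push_cast at hk ⊢
        linear_combination hk
      have h4 : α j * s = α j * u + k * (2 * Real.pi) := by exact_mod_cast h3
      linear_combination h4
    choose k hk using key
    have hsune : s - u ≠ 0 := sub_ne_zero.mpr hne
    have hk0 : (k 0 : ℝ) ≠ 0 := by
      intro h
      have h0 := hk 0
      rw [h, mul_zero] at h0
      exact (mul_ne_zero (hα0 0) hsune) h0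
    intro j
    refine ⟨(k j : ℚ) / (k 0 : ℚ), ?_⟩
    have hcast : (((k j : ℚ) / (k 0 : ℚ) : ℚ) : ℝ) = (k j : ℝ) / (k 0 : ℝ) := by
      push_cast; ring
    rw [hcast, div_mul_eq_mul_div, eq_div_iff hk0]
    have hc : (s - u) * (α j * k 0) = (s - u) * ((k j : ℝ) * α 0) := by
      linear_combination (k 0 : ℝ) * (hk j) - (k j : ℝ) * (hk 0)
    exact mul_left_cancel₀ hsune hc
  · intro h hinj
    choose q hq using h
    set N : ℕ := ∏ j, (q j).den with hN
    have hNpos : 0 < N := Finset.prod_pos (fun j _ => (q j).pos)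
    set t : ℝ := 2 * Real.pi * N / α 0 with ht
    have ht0 : t ≠ 0 := by
      apply div_ne_zero _ (hα0 0)
      have : (0:ℝ) < 2 * Real.pi * N := by positivity
      exact ne_of_gt this
    have hm : ∀ j, ∃ m : ℤ, α j * t = m * (2 * Real.pi) := by
      intro j
      obtain ⟨c, hc⟩ := Finset.dvd_prod_of_mem (fun j => (q j).den) (Finset.mem_univ j)
      refine ⟨(q j).num * c, ?_⟩
      have hden : ((q j).den : ℝ) ≠ 0 := Nat.cast_ne_zero.mpr (q j).den_nz
      have hqr : (q j : ℝ) = (q j).num / (q j).den := by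
        exact_mod_cast (Rat.num_div_den (q j)).symm
      have hNc : (N : ℝ) = ((q j).den : ℝ) * c := by exact_mod_cast hc
      have hqN : (q j : ℝ) * N = ((q j).num * c : ℤ) := by
        rw [hqr, hNc]
        push_cast
        field_simp
      rw [hq j, ht]
      have h1 : (q j : ℝ) * α 0 * (2 * Real.pi * N / α 0) = (q j : ℝ) * N * (2 * Real.pi) := by
        field_simp [hα0 0]
      rw [h1, hqN]
    have heq : γ t = γ 0 := by
      funext j
      rw [hγ, hγ]
      obtain ⟨m, hm'⟩ := hm j
      have e1 : Complex.exp (Complex.I * (α j * t)) = 1 := by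
        have : (Complex.I * ((α j : ℂ) * (t : ℂ))) = (m : ℂ) * (2 * Real.pi * Complex.I) := by
          have : ((α j * t : ℝ) : ℂ) = ((m * (2 * Real.pi) : ℝ) : ℂ) := by exact_mod_cast hm'
          push_cast at this ⊢
          linear_combination Complex.I * this
        rw [this, Complex.exp_int_mul_two_pi_mul_I]
      have e2 : Complex.exp (Complex.I * ((α j : ℂ) * (0:ℝ))) = 1 := by
        norm_num
      rw [e1, e2]
    exact ht0 (hinj heq)
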